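/- Let U be a finite bounded poset (with least element 0_U and greatest element 1_U) and p = min {p' : U order-embeds into P([p'])}. Then for all n ≥ p, Sp(U,n) = C(n−p, ⌊(n−p)/2⌋), where Sp(U,n) is the maximum number of pairwise unrelated copies of U in the powerset lattice of [n]. -/

import Mathlib

/-- Order iso on powersets induced by an equiv. -/
noncomputable def setOrderIsoOfEquiv {α β : Type*} (e : α ≃ β) : Set α ≃o Set β where
  toFun s := e '' s
  invFun s := e.symm '' s
  left_inv s := by simp [Set.image_image]
  right_inv s := by simp [Set.image_image]
  map_rel_iff' := by
    intro s t
    exact Set.image_subset_image_iff e.injective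

/-- Any finite partial order embeds into the powerset of itself. -/
noncomputable def selfEmbed (U : Type*) [PartialOrder U] : U ↪o Set U :=
  OrderEmbedding.ofMapLEIff (fun u => {v | v ≤ u}) (by
    intro u v
    constructor
    · intro h; exact h (le_refl u)
    · intro h w hw; exact le_trans hw h)

theorem sInfSetNonempty (U : Type*) [PartialOrder U] [Fintype U] :
    Nonempty (U ↪o Set (Fin (Fintype.card U))) :=
  ⟨(selfEmbed U).trans (setOrderIsoOfEquiv (Fintype.equivFin U)).toOrderEmbedding⟩


lemma split_finset {β : Type*} [LinearOrder β] [DecidableEq β] (T : Finset β) (c : ℕ) (hc : c ≤ T.card) :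
    ∃ B ⊆ T, B.card = c ∧ ∀ a ∈ B, ∀ b ∈ T \ B, a < b := by
  set m := T.card with hm
  set em := T.orderEmbOfFin hm.symm with hem
  set B : Finset β := (Finset.univ.filter fun j : Fin m => (j : ℕ) < c).image em with hB
  have hBT : B ⊆ T := by
    intro a ha
    rw [hB] at ha
    obtain ⟨j, _, rfl⟩ := Finset.mem_image.mp ha
    exact T.orderEmbOfFin_mem hm.symm j
  have hfilter : (Finset.univ.filter fun j : Fin m => (j : ℕ) < c)
      = (Finset.univ : Finset (Fin c)).map (Fin.castLEEmb hc) := by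
    ext j
    simp only [Finset.mem_filter, Finset.mem_univ, true_and, Finset.mem_map,
      Fin.castLEEmb_apply]
    constructor
    · intro h; exact ⟨⟨j, h⟩, by ext; simp⟩
    · rintro ⟨i, _, rfl⟩; exact i.isLt
  have hcard : B.card = c := by
    rw [hB, Finset.card_image_of_injective _ em.injective, hfilter, Finset.card_map,
      Finset.card_univ, Fintype.card_fin]
  refine ⟨B, hBT, hcard, ?_⟩
  intro a ha b hb
  rw [Finset.mem_sdiff] at hb
  obtain ⟨j, hj, rfl⟩ := Finset.mem_image.mp (hB ▸ ha)
  have hbT : b ∈ T := hb.1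
  have : b ∈ Set.range em := by rw [Finset.range_orderEmbOfFin]; exact hbT
  obtain ⟨j', rfl⟩ := this
  have hj' : ¬ ((j' : ℕ) < c) := by
    intro h
    exact hb.2 (hB ▸ Finset.mem_image.mpr ⟨j', by simp [h], rfl⟩)
  have : j < j' := by
    rw [Finset.mem_filter] at hj
    exact Fin.lt_def.mpr (lt_of_lt_of_le hj.2 (not_lt.mp hj'))
  exact em.strictMono this


lemma exists_perm_map {α : Type*} [Fintype α] [DecidableEq α] (C D S T : Finset α)
    (hCD : Disjoint C D) (hST : Disjoint S T) (h1 : C.card = S.card) (h2 : D.card = T.card)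
    (hU : C ∪ D = S ∪ T) :
    ∃ h : Equiv.Perm α, (∀ x ∈ C, h x ∈ S) ∧ (∀ x ∈ D, h x ∈ T) := by
  have e1 : C ≃ S := (C.equivFin).trans ((S.equivFinOfCardEq h1.symm).symm)
  have e2 : D ≃ T := (D.equivFin).trans ((T.equivFinOfCardEq h2.symm).symm)
  set f : α → α := fun x =>
    if hx : x ∈ C then ↑(e1 ⟨x, hx⟩) else if hx : x ∈ D then ↑(e2 ⟨x, hx⟩) else x with hf
  have hfC : ∀ x (hx : x ∈ C), f x = ↑(e1 ⟨x, hx⟩) := by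
    intro x hx; simp [hf, hx]
  have hfD : ∀ x (hx : x ∈ D), f x = ↑(e2 ⟨x, hx⟩) := by
    intro x hx
    have hxC : x ∉ C := fun h => (Finset.disjoint_left.mp hCD h) hx
    simp [hf, hx, hxC]
  have hfO : ∀ x, x ∉ C → x ∉ D → f x = x := by
    intro x h1 h2; simp [hf, h1, h2]
  have hmemS : ∀ x ∈ C, f x ∈ S := fun x hx => by rw [hfC x hx]; exact (e1 ⟨x, hx⟩).2
  have hmemT : ∀ x ∈ D, f x ∈ T := fun x hx => by rw [hfD x hx]; exact (e2 ⟨x, hx⟩).2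
  have hmemO : ∀ x, x ∉ C → x ∉ D → (f x ∉ S ∧ f x ∉ T) := by
    intro x hx hy
    rw [hfO x hx hy]
    have : x ∉ S ∪ T := by rw [← hU]; simp [hx, hy]
    simp only [Finset.mem_union] at this
    exact ⟨fun h => this (Or.inl h), fun h => this (Or.inr h)⟩
  have hinj : Function.Injective f := by
    intro x y hxy
    by_cases hxC : x ∈ C
    · by_cases hyC : y ∈ C
      · exact Subtype.mk_eq_mk.mp
          (e1.injective (Subtype.ext (by rw [← hfC x hxC, ← hfC y hyC, hxy])))
      · by_cases hyD : y ∈ D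
        · exact absurd (hxy ▸ hmemS x hxC)
            (fun h => (Finset.disjoint_left.mp hST h) (hmemT y hyD))
        · exact absurd (hxy ▸ hmemS x hxC) ((hmemO y hyC hyD).1)
    · by_cases hxD : x ∈ D
      · by_cases hyC : y ∈ C
        · exact absurd (hxy ▸ hmemT x hxD)
            (fun h => (Finset.disjoint_left.mp hST (hmemS y hyC)) h)
        · by_cases hyD : y ∈ D
          · exact Subtype.mk_eq_mk.mp
              (e2.injective (Subtype.ext (by rw [← hfD x hxD, ← hfD y hyD, hxy])))
          · exact absurd (hxy ▸ hmemT x hxD) ((hmemO y hyC hyD).2)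
      · by_cases hyC : y ∈ C
        · exact absurd (hxy.symm ▸ hmemS y hyC) ((hmemO x hxC hxD).1)
        · by_cases hyD : y ∈ D
          · exact absurd (hxy.symm ▸ hmemT y hyD) ((hmemO x hxC hxD).2)
          · rw [← hfO x hxC hxD, ← hfO y hyC hyD, hxy]
  exact ⟨Equiv.ofBijective f ((Finite.injective_iff_bijective).mp hinj), hmemS, hmemT⟩




open Finset in
/-- A fixed choice of a permutation sending `C` into `S` and `D` into `(C ∪ D) \ S`. -/
noncomputable def pickPerm {α : Type*} [Fintype α] [DecidableEq α] (C D S : Finset α) :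
    Equiv.Perm α :=
  if h : ∃ hh : Equiv.Perm α, (∀ x ∈ C, hh x ∈ S) ∧ (∀ x ∈ D, hh x ∈ (C ∪ D) \ S)
    then h.choose else 1

open Finset in
lemma perm_count_ge {n : ℕ} (C D : Finset (Fin n)) (hCD : Disjoint C D) :
    (n : ℕ).factorial ≤
      ((Finset.univ.filter
          (fun σ : Equiv.Perm (Fin n) => ∀ x ∈ C, ∀ y ∈ D, σ x < σ y)).card)
        * (C.card + D.card).choose C.card := by
  set c := C.card
  set d := D.card
  set G := C ∪ D with hG
  have hGcard : G.card = c + d := card_union_of_disjoint hCD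
  set E := Finset.univ.filter
      (fun σ : Equiv.Perm (Fin n) => ∀ x ∈ C, ∀ y ∈ D, σ x < σ y) with hE
  -- the injection
  have key : ∀ σ : Equiv.Perm (Fin n), ∃ S : Finset (Fin n),
      S ⊆ G ∧ S.card = c ∧ ∀ x ∈ S, ∀ y ∈ G \ S, σ x < σ y := by
    intro σ
    obtain ⟨B, hBT, hBc, hBlt⟩ := split_finset (G.image σ) c
      (by rw [Finset.card_image_of_injective _ σ.injective, hGcard]; omega)
    refine ⟨G.filter (fun x => σ x ∈ B), filter_subset _ _, ?_, ?_⟩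
    · have h1 : (G.filter (fun x => σ x ∈ B)).image σ = B := by
        ext b
        simp only [Finset.mem_image, Finset.mem_filter]
        constructor
        · rintro ⟨x, ⟨-, h⟩, rfl⟩; exact h
        · intro hb
          obtain ⟨x, hxG, rfl⟩ := Finset.mem_image.mp (hBT hb)
          exact ⟨x, ⟨hxG, hb⟩, rfl⟩
      have : ((G.filter (fun x => σ x ∈ B)).image σ).card = B.card := by rw [h1]
      rwa [Finset.card_image_of_injective _ σ.injective, hBc] at this
    · intro x hx y hy
      rw [Finset.mem_filter] at hx
      rw [Finset.mem_sdiff, Finset.mem_filter] at hy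
      refine hBlt _ hx.2 _ (Finset.mem_sdiff.mpr ⟨Finset.mem_image_of_mem σ hy.1, ?_⟩)
      exact fun h => hy.2 ⟨hy.1, h⟩
  set Sel : Equiv.Perm (Fin n) → Finset (Fin n) := fun σ => (key σ).choose with hSel
  have hSelspec : ∀ σ, (Sel σ) ⊆ G ∧ (Sel σ).card = c ∧
      ∀ x ∈ Sel σ, ∀ y ∈ G \ Sel σ, σ x < σ y := fun σ => (key σ).choose_spec
  -- pickPerm properties for any S as above
  have hpick : ∀ S : Finset (Fin n), S ⊆ G → S.card = c →
      (∀ x ∈ C, pickPerm C D S x ∈ S) ∧ (∀ x ∈ D, pickPerm C D S x ∈ G \ S) := by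
    intro S hSG hSc
    have hex : ∃ hh : Equiv.Perm (Fin n),
        (∀ x ∈ C, hh x ∈ S) ∧ (∀ x ∈ D, hh x ∈ (C ∪ D) \ S) := by
      apply exists_perm_map C D S (G \ S) hCD (disjoint_sdiff)
      · exact hSc.symm
      · rw [card_sdiff_of_subset hSG, hGcard, hSc]; omega
      · rw [Finset.union_sdiff_of_subset hSG]
    rw [pickPerm, dif_pos hex]
    exact hex.choose_spec
  set F : Equiv.Perm (Fin n) → Equiv.Perm (Fin n) × Finset (Fin n) :=
    fun σ => ((pickPerm C D (Sel σ)).trans σ, Sel σ) with hF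
  have hmaps : ∀ σ ∈ (Finset.univ : Finset (Equiv.Perm (Fin n))),
      F σ ∈ E ×ˢ G.powersetCard c := by
    intro σ _
    obtain ⟨hSG, hSc, hSlt⟩ := hSelspec σ
    obtain ⟨hC, hD⟩ := hpick (Sel σ) hSG hSc
    rw [Finset.mem_product]
    constructor
    · rw [hE, Finset.mem_filter]
      refine ⟨Finset.mem_univ _, ?_⟩
      intro x hx y hy
      exact hSlt _ (hC x hx) _ (hD y hy)
    · exact Finset.mem_powersetCard.mpr ⟨hSG, hSc⟩
  have hinj : Set.InjOn F (Finset.univ : Finset (Equiv.Perm (Fin n))) := by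
    intro σ1 _ σ2 _ h
    rw [hF] at h
    have hS : Sel σ1 = Sel σ2 := congrArg Prod.snd h
    have hτ : (pickPerm C D (Sel σ1)).trans σ1 = (pickPerm C D (Sel σ2)).trans σ2 :=
      congrArg Prod.fst h
    rw [hS] at hτ
    have := congrArg (fun τ => (pickPerm C D (Sel σ2)).symm.trans τ) hτ
    simpa [← Equiv.trans_assoc] using this
  have hcard := Finset.card_le_card_of_injOn F hmaps hinj
  rw [Finset.card_univ, Fintype.card_perm, Fintype.card_fin] at hcard
  rw [Finset.card_product, Finset.card_powersetCard, hGcard] at hcard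
  exact hcard

open Finset in
lemma bollobas {n k : ℕ} (C D : Fin k → Finset (Fin n))
    (hdisj : ∀ i, Disjoint (C i) (D i))
    (hcross : ∀ i j, i ≠ j → ((C i) ∩ (D j)).Nonempty)
    {M : ℕ} (hM : ∀ i, ((C i).card + (D i).card).choose (C i).card ≤ M) :
    k ≤ M := by
  set E : Fin k → Finset (Equiv.Perm (Fin n)) := fun i =>
    Finset.univ.filter (fun σ => ∀ x ∈ C i, ∀ y ∈ D i, σ x < σ y) with hE
  have hdisjE : ∀ i j, i ≠ j → Disjoint (E i) (E j) := by
    intro i j hij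
    rw [Finset.disjoint_left]
    intro σ hi hj
    rw [hE, Finset.mem_filter] at hi hj
    obtain ⟨x, hx⟩ := hcross i j hij
    obtain ⟨y, hy⟩ := hcross j i hij.symm
    rw [Finset.mem_inter] at hx hy
    exact absurd (hi.2 x hx.1 y hy.2) (not_lt.mpr (le_of_lt (hj.2 y hy.1 x hx.2)))
  have hsum : ∑ i, (E i).card ≤ n.factorial := by
    have h1 : (Finset.univ.biUnion E).card = ∑ i, (E i).card :=
      Finset.card_biUnion (fun i _ j _ hij => hdisjE i j hij)
    calc ∑ i, (E i).card = (Finset.univ.biUnion E).card := h1.symm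
      _ ≤ (Finset.univ : Finset (Equiv.Perm (Fin n))).card := Finset.card_le_card (by simp)
      _ = n.factorial := by rw [Finset.card_univ, Fintype.card_perm, Fintype.card_fin]
  have hlow : ∀ i, n.factorial ≤ (E i).card * M := fun i =>
    le_trans (perm_count_ge (C i) (D i) (hdisj i)) (Nat.mul_le_mul_left _ (hM i))
  have hkn : k * n.factorial ≤ M * n.factorial := by
    calc k * n.factorial = ∑ _i : Fin k, n.factorial := by
          rw [Finset.sum_const, Finset.card_univ, Fintype.card_fin, smul_eq_mul]
      _ ≤ ∑ i, (E i).card * M := Finset.sum_le_sum (fun i _ => hlow i)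
      _ = (∑ i, (E i).card) * M := (Finset.sum_mul ..).symm
      _ ≤ n.factorial * M := Nat.mul_le_mul_right _ hsum
      _ = M * n.factorial := Nat.mul_comm _ _
  exact Nat.le_of_mul_le_mul_right hkn (Nat.factorial_pos n)



lemma upper_bound (U : Type*) [PartialOrder U] [Fintype U] [Nonempty U] [BoundedOrder U]
    (p : ℕ) (hp : p = sInf {p' : ℕ | Nonempty (U ↪o Set (Fin p'))})
    (n : ℕ) (hn : p ≤ n) (k : ℕ) (hk : Nonempty ((Σ _ : Fin k, U) ↪o Set (Fin n))) :
    k ≤ (n - p).choose ((n - p) / 2) := by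
  obtain ⟨f0⟩ := hk
  set f : (Σ _ : Fin k, U) ↪o Finset (Fin n) :=
    f0.trans (Fintype.finsetOrderIsoSet (α := Fin n)).symm.toOrderEmbedding with hfdef
  have mkle : ∀ (i : Fin k) (u v : U), ((⟨i, u⟩ : Σ _ : Fin k, U) ≤ ⟨i, v⟩) ↔ u ≤ v := by
    intro i u v
    constructor
    · intro h; cases h; assumption
    · intro h; exact Sigma.LE.fiber _ _ _ h
  have hidx : ∀ (i j : Fin k) (a b : U), (⟨i, a⟩ : Σ _ : Fin k, U) ≤ ⟨j, b⟩ → i = j := by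
    intro i j a b h
    cases h; rfl
  set A : Fin k → Finset (Fin n) := fun i => f ⟨i, ⊥⟩ with hA
  set B : Fin k → Finset (Fin n) := fun i => f ⟨i, ⊤⟩ with hB
  have hsub : ∀ i (u : U), A i ⊆ f ⟨i, u⟩ ∧ f ⟨i, u⟩ ⊆ B i := by
    intro i u
    constructor
    · exact f.le_iff_le.mpr ((mkle _ _ _).mpr bot_le)
    · exact f.le_iff_le.mpr ((mkle _ _ _).mpr le_top)
  have hAB : ∀ i, A i ⊆ B i := fun i => (hsub i ⊥).2
  -- each interval [A i, B i] contains a copy of U, so has at least p levels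
  have hp_le : ∀ i, p + (A i).card ≤ (B i).card := by
    intro i
    set G := B i \ A i with hG
    set m := G.card with hm
    set e := G.equivFin with he
    have hpm : p ≤ m := by
      rw [hp]
      apply Nat.sInf_le
      refine ⟨OrderEmbedding.ofMapLEIff
        (fun u => {t : Fin m | ↑(e.symm t) ∈ f ⟨i, u⟩}) ?_⟩
      intro u v
      constructor
      · intro hle
        have hsub2 : f ⟨i, u⟩ ⊆ f ⟨i, v⟩ := by
          intro x hx
          by_cases hxA : x ∈ A i
          · exact (hsub i v).1 hxA
          · have hxG : x ∈ G := Finset.mem_sdiff.mpr ⟨(hsub i u).2 hx, hxA⟩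
            have ht : e ⟨x, hxG⟩ ∈ {t : Fin m | ↑(e.symm t) ∈ f ⟨i, u⟩} := by
              change ((e.symm (e ⟨x, hxG⟩) : Fin n)) ∈ f ⟨i, u⟩
              rw [Equiv.symm_apply_apply]
              exact hx
            have := hle ht
            simpa only [Set.mem_setOf_eq, Equiv.symm_apply_apply] using this
        exact (mkle _ _ _).mp (f.le_iff_le.mp hsub2)
      · intro huv
        have : f ⟨i, u⟩ ⊆ f ⟨i, v⟩ := f.le_iff_le.mpr ((mkle _ _ _).mpr huv)
        intro t ht
        exact this ht
    have hcards : m = (B i).card - (A i).card := by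
      rw [hm, hG, Finset.card_sdiff_of_subset (hAB i)]
    have : (A i).card ≤ (B i).card := Finset.card_le_card (hAB i)
    omega
  -- set up Bollobás
  set CC : Fin k → Finset (Fin n) := fun i => A i with hCC
  set DD : Fin k → Finset (Fin n) := fun i => (B i)ᶜ with hDD
  apply bollobas CC DD
  · intro i
    rw [Finset.disjoint_left]
    intro x hx hx'
    exact (Finset.mem_compl.mp hx') (hAB i hx)
  · intro i j hij
    have : ¬ A i ⊆ B j := by
      intro hsub3
      exact hij (hidx i j ⊥ ⊤ (f.le_iff_le.mp hsub3))
    obtain ⟨x, hx1, hx2⟩ := Finset.not_subset.mp this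
    exact ⟨x, Finset.mem_inter.mpr ⟨hx1, Finset.mem_compl.mpr hx2⟩⟩
  · intro i
    have h1 : (B i)ᶜ.card = n - (B i).card := by
      rw [Finset.card_compl, Fintype.card_fin]
    have h2 : (B i).card ≤ n := by
      have := Finset.card_le_univ (B i)
      simpa using this
    have h3 : (A i).card + (B i)ᶜ.card ≤ n - p := by
      have := hp_le i
      omega
    calc ((A i).card + (B i)ᶜ.card).choose (A i).card
        ≤ (n - p).choose (A i).card := Nat.choose_le_choose _ h3
      _ ≤ (n - p).choose ((n - p) / 2) := Nat.choose_le_middle _ _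



lemma lower_bound (U : Type*) [PartialOrder U] [Fintype U] [Nonempty U] [BoundedOrder U]
    (p : ℕ) (g : U ↪o Set (Fin p)) (n : ℕ) (hn : p ≤ n) :
    Nonempty ((Σ _ : Fin ((n - p).choose ((n - p) / 2)), U) ↪o Set (Fin n)) := by
  set m := n - p with hm
  set M := m.choose (m / 2) with hM
  set P := (Finset.univ : Finset (Fin m)).powersetCard (m / 2) with hP
  have hPcard : P.card = M := by
    rw [hP, Finset.card_powersetCard, Finset.card_univ, Fintype.card_fin]
  set ι : Fin M ≃ ↥P := (Finset.equivFinOfCardEq hPcard).symm with hι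
  have hιcard : ∀ i : Fin M, ((ι i : P) : Finset (Fin m)).card = m / 2 := by
    intro i
    exact (Finset.mem_powersetCard.mp (ι i).2).2
  set F : (Σ _ : Fin M, U) → Set (Fin p ⊕ Fin m) := fun x =>
    (Sum.inl '' (g x.2)) ∪ (Sum.inr '' (((ι x.1 : P) : Finset (Fin m)) : Set (Fin m)))
    with hF
  have hFle : ∀ a b : (Σ _ : Fin M, U), F a ⊆ F b ↔ a ≤ b := by
    rintro ⟨i, u⟩ ⟨j, v⟩
    constructor
    · intro h
      have hij : i = j := by
        have hsub : ((ι i : P) : Finset (Fin m)) ⊆ ((ι j : P) : Finset (Fin m)) := by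
          intro t ht
          have h1 : (Sum.inr t : Fin p ⊕ Fin m) ∈ F ⟨i, u⟩ := Or.inr ⟨t, by simpa using ht, rfl⟩
          have h2 := h h1
          rcases h2 with h2 | h2
          · obtain ⟨x, _, hx⟩ := h2
            exact absurd hx (by simp)
          · obtain ⟨t', ht', hteq⟩ := h2
            have : t' = t := Sum.inr.inj hteq
            subst this
            simpa using ht'
        have heq : ((ι i : P) : Finset (Fin m)) = ((ι j : P) : Finset (Fin m)) :=
          Finset.eq_of_subset_of_card_le hsub (by rw [hιcard i, hιcard j])
        exact ι.injective (Subtype.ext heq)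
      subst hij
      have huv : u ≤ v := by
        apply g.le_iff_le.mp
        intro x hx
        have h1 : (Sum.inl x : Fin p ⊕ Fin m) ∈ F ⟨i, u⟩ := Or.inl ⟨x, hx, rfl⟩
        have h2 := h h1
        rcases h2 with h2 | h2
        · obtain ⟨x', hx', hxeq⟩ := h2
          have : x' = x := Sum.inl.inj hxeq
          subst this
          exact hx'
        · obtain ⟨t', _, hteq⟩ := h2
          exact absurd hteq (by simp)
      exact Sigma.LE.fiber _ _ _ huv
    · intro h
      cases h with
      | fiber i u v huv =>
        apply Set.union_subset_union _ (subset_refl _)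
        exact Set.image_mono (g.le_iff_le.mpr huv)
  refine ⟨(OrderEmbedding.ofMapLEIff F hFle).trans
    (setOrderIsoOfEquiv (finSumFinEquiv.trans (finCongr (by omega)))).toOrderEmbedding⟩

/-- Sperner theorem for bounded posets: if `U` is a finite bounded poset and
`p = min {p' : U ↪o P([p'])}`, then for `n ≥ p`,
`Sp(U,n) = C(n-p, ⌊(n-p)/2⌋)`. -/
theorem stmt_12 (U : Type*) [PartialOrder U] [Fintype U] [Nonempty U]
    [BoundedOrder U]
    (p : ℕ) (hp : p = sInf {p' : ℕ | Nonempty (U ↪o Set (Fin p'))})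
    (n : ℕ) (hn : p ≤ n) :
    sSup {k : ℕ | Nonempty ((Σ _ : Fin k, U) ↪o Set (Fin n))}
      = (n - p).choose ((n - p) / 2) := by
  set M := (n - p).choose ((n - p) / 2) with hM
  set K := {k : ℕ | Nonempty ((Σ _ : Fin k, U) ↪o Set (Fin n))} with hK
  have hne : {p' : ℕ | Nonempty (U ↪o Set (Fin p'))}.Nonempty :=
    ⟨Fintype.card U, sInfSetNonempty U⟩
  have hpmem : Nonempty (U ↪o Set (Fin p)) := by
    rw [hp]
    exact Nat.sInf_mem hne
  obtain ⟨g⟩ := hpmem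
  have hMK : M ∈ K := lower_bound U p g n hn
  have hub : ∀ k ∈ K, k ≤ M := fun k hk => upper_bound U p hp n hn k hk
  exact le_antisymm (csSup_le ⟨M, hMK⟩ hub) (le_csSup ⟨M, hub⟩ hMK)
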